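/- (Lindblad) Let ζ be a ℂ-linear map on M_d(ℂ) that is completely positive (its Choi matrix is positive semidefinite) and unital (ζ(𝟙) = 𝟙), and suppose its Hilbert–Schmidt adjoint has a positive definite fixed point, i.e. there exists a positive definite matrix ρ₀ ∈ M_d(ℂ) with Tr(ρ₀ · ζ(X)) = Tr(ρ₀ · X) for all X ∈ M_d(ℂ). Then the fixed subspace of ζ is closed under matrix multiplication: if ζ(Z) = Z and ζ(W) = W, then ζ(Z·W) = Z·W. -/

import Mathlib

open Matrix Kronecker
open scoped ComplexOrder

/-- A bipartite matrix on `ℂ^{d₁} ⊗ ℂ^{d₂}` is separable if it is a finite sum of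
Kronecker products of positive semidefinite matrices. -/
def MatSep {d₁ d₂ : ℕ} (ρ : Matrix (Fin d₁ × Fin d₂) (Fin d₁ × Fin d₂) ℂ) : Prop :=
  ∃ (k : ℕ) (A : Fin k → Matrix (Fin d₁) (Fin d₁) ℂ) (B : Fin k → Matrix (Fin d₂) (Fin d₂) ℂ),
    (∀ i, (A i).PosSemidef) ∧ (∀ i, (B i).PosSemidef) ∧ ρ = ∑ i, A i ⊗ₖ B i

/-- The Choi matrix `C(φ) = Σ_{i,j} φ(E_{ij}) ⊗ E_{ij}` of a linear map on `M_d(ℂ)`. -/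
noncomputable def choi {d : ℕ} (φ : Matrix (Fin d) (Fin d) ℂ →ₗ[ℂ] Matrix (Fin d) (Fin d) ℂ) :
    Matrix (Fin d × Fin d) (Fin d × Fin d) ℂ :=
  ∑ i : Fin d, ∑ j : Fin d, φ (Matrix.single i j 1) ⊗ₖ Matrix.single i j (1 : ℂ)

/-- A quantum channel: trace-preserving and completely positive (positive semidefinite
Choi matrix). -/
def IsQChannel {d : ℕ} (φ : Matrix (Fin d) (Fin d) ℂ →ₗ[ℂ] Matrix (Fin d) (Fin d) ℂ) : Prop :=
  (∀ X, (φ X).trace = X.trace) ∧ (choi φ).PosSemidef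

/-! ### Auxiliary lemmas -/

lemma Lindblad.kron_conjT {k n : Type*} [Fintype k] [Fintype n]
    (A : Matrix k k ℂ) (B : Matrix n n ℂ) : (A ⊗ₖ B)ᴴ = Aᴴ ⊗ₖ Bᴴ := by
  ext ⟨a, b⟩ ⟨c, e⟩
  simp [conjTranspose_apply, kroneckerMap_apply, mul_comm]

open scoped MatrixOrder in
lemma Lindblad.psd_exists {n : Type*} [Fintype n] [DecidableEq n] {E : Matrix n n ℂ}
    (hE : E.PosSemidef) : ∃ B : Matrix n n ℂ, E = Bᴴ * B :=
  CStarAlgebra.nonneg_iff_eq_star_mul_self.mp hE.nonneg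

/-- A positive semidefinite matrix with zero trace is zero. -/
lemma Lindblad.psd_trace_zero {n : Type*} [Fintype n] [DecidableEq n] {E : Matrix n n ℂ}
    (hE : E.PosSemidef) (h : E.trace = 0) : E = 0 := by
  obtain ⟨F, rfl⟩ := Lindblad.psd_exists hE
  suffices hF : F = 0 by simp [hF]
  have htr : ∑ j, ∑ i, star (F i j) * F i j = 0 := by
    simpa [Matrix.trace, Matrix.diag, Matrix.mul_apply, conjTranspose_apply] using h
  ext i j
  have h1 : ∀ j' ∈ Finset.univ, (0:ℂ) ≤ ∑ i, star (F i j') * F i j' := fun j' _ =>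
    Finset.sum_nonneg fun i _ => star_mul_self_nonneg _
  have h2 := (Finset.sum_eq_zero_iff_of_nonneg h1).mp htr j (Finset.mem_univ _)
  have h3 : ∀ i' ∈ Finset.univ, (0:ℂ) ≤ star (F i' j) * F i' j := fun i' _ =>
    star_mul_self_nonneg _
  have h4 := (Finset.sum_eq_zero_iff_of_nonneg h3).mp h2 i (Finset.mem_univ _)
  simpa [mul_eq_zero] using h4

open scoped MatrixOrder in
/-- If `ρ` is positive definite, `D` is positive semidefinite and `Tr(ρ D) = 0`, then `D = 0`. -/
lemma Lindblad.psd_pd_trace_zero {n : Type*} [Fintype n] [DecidableEq n] {ρ D : Matrix n n ℂ}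
    (hρ : ρ.PosDef) (hD : D.PosSemidef) (h : (ρ * D).trace = 0) : D = 0 := by
  obtain ⟨C, rfl⟩ := Lindblad.psd_exists hD
  suffices hC : C = 0 by simp [hC]
  have h1 : (C * ρ * Cᴴ).trace = 0 := by
    calc (C * ρ * Cᴴ).trace = (Cᴴ * (C * ρ)).trace := Matrix.trace_mul_comm (C * ρ) Cᴴ
    _ = (ρ * (Cᴴ * C)).trace := by rw [← Matrix.mul_assoc, Matrix.trace_mul_comm (Cᴴ * C) ρ]
    _ = 0 := h
  have h2 : C * ρ * Cᴴ = 0 :=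
    Lindblad.psd_trace_zero (hρ.posSemidef.mul_mul_conjTranspose_same C) h1
  set s := CFC.sqrt ρ with hs
  have hρs : ρ = s * s := (CFC.sqrt_mul_sqrt_self ρ hρ.posSemidef.nonneg).symm
  have h3 : (C * s) * (C * s)ᴴ = 0 := by
    rw [conjTranspose_mul, (CFC.sqrt_nonneg ρ).posSemidef.isHermitian.eq]
    calc C * s * (s * Cᴴ) = C * (s * s) * Cᴴ := by
          rw [Matrix.mul_assoc, Matrix.mul_assoc, Matrix.mul_assoc]
    _ = C * ρ * Cᴴ := by rw [← hρs]
    _ = 0 := h2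
  have h4 : C * s = 0 := Matrix.self_mul_conjTranspose_eq_zero.mp h3
  have h5 : C * ρ = 0 := by rw [hρs, ← Matrix.mul_assoc, h4, Matrix.zero_mul]
  obtain ⟨u, hu⟩ := hρ.isUnit
  calc C = C * ρ * (↑u⁻¹ : Matrix n n ℂ) := by
        rw [← hu, Matrix.mul_assoc, Units.mul_inv, Matrix.mul_one]
  _ = 0 := by rw [h5, Matrix.zero_mul]

lemma Lindblad.choi_apply {d : ℕ} (φ : Matrix (Fin d) (Fin d) ℂ →ₗ[ℂ] Matrix (Fin d) (Fin d) ℂ)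
    (a b c e : Fin d) : choi φ (a,b) (c,e) = φ (Matrix.single b e 1) a c := by
  simp [choi, Matrix.sum_apply, kroneckerMap_apply, Matrix.single, ite_and, Matrix.of_apply]

/-- Kraus decomposition of a completely positive map. -/
lemma Lindblad.kraus {d : ℕ} (φ : Matrix (Fin d) (Fin d) ℂ →ₗ[ℂ] Matrix (Fin d) (Fin d) ℂ)
    (hCP : (choi φ).PosSemidef) :
    ∃ K : (Fin d × Fin d) → Matrix (Fin d) (Fin d) ℂ,
      ∀ X, φ X = ∑ m, K m * X * (K m)ᴴ := by
  obtain ⟨B, hB⟩ := Lindblad.psd_exists hCP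
  refine ⟨fun m => Matrix.of fun a b => star (B m (a, b)), fun X => ?_⟩
  have hbasis : ∀ b e : Fin d, φ (Matrix.single b e 1) =
      ∑ m, (Matrix.of fun a b' => star (B m (a, b'))) * Matrix.single b e (1:ℂ) *
        (Matrix.of fun a b' => star (B m (a, b')))ᴴ := by
    intro b e
    ext a c
    have h1 : φ (Matrix.single b e 1) a c = (Bᴴ * B) (a,b) (c,e) := by
      rw [← Lindblad.choi_apply, hB]
    rw [h1]
    simp only [Matrix.mul_apply, conjTranspose_apply, Matrix.sum_apply, Matrix.of_apply,
      Matrix.single, Matrix.of_apply, ite_and, Finset.sum_ite_eq, Finset.mem_univ, if_true,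
      Finset.mul_sum, Finset.sum_mul, mul_ite, ite_mul, zero_mul, mul_zero, mul_one,
      Finset.sum_ite_eq', star_star]
  induction X using Matrix.induction_on' with
  | h_zero => simp
  | h_add p q hp hq =>
      rw [map_add, hp, hq, ← Finset.sum_add_distrib]
      congr 1; ext m; rw [Matrix.mul_add, Matrix.add_mul]
  | h_std_basis i j x =>
      have : Matrix.single i j x = x • Matrix.single i j (1:ℂ) := by
        rw [smul_single, smul_eq_mul, mul_one]
      rw [this, _root_.map_smul, hbasis i j, Finset.smul_sum]
      congr 1; ext m
      rw [Matrix.mul_smul, Matrix.smul_mul]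

/-- The stacked matrix built from a Kraus family. -/
noncomputable def Lindblad.bigM {d : ℕ} (K : (Fin d × Fin d) → Matrix (Fin d) (Fin d) ℂ) :
    Matrix ((Fin d × Fin d) × Fin d) (Fin d) ℂ :=
  Matrix.of fun p j => star (K p.1 j p.2)

lemma Lindblad.bigM_conjT_mul {d : ℕ} (K : (Fin d × Fin d) → Matrix (Fin d) (Fin d) ℂ) :
    (Lindblad.bigM K)ᴴ * Lindblad.bigM K = ∑ m, K m * (K m)ᴴ := by
  ext a b
  simp only [Matrix.mul_apply, conjTranspose_apply, Lindblad.bigM, Matrix.of_apply,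
    Matrix.sum_apply, Fintype.sum_prod_type, star_star]

lemma Lindblad.bigM_conj {d : ℕ} (K : (Fin d × Fin d) → Matrix (Fin d) (Fin d) ℂ)
    (X : Matrix (Fin d) (Fin d) ℂ) :
    (Lindblad.bigM K)ᴴ * (((1 : Matrix (Fin d × Fin d) (Fin d × Fin d) ℂ) ⊗ₖ X) *
      Lindblad.bigM K) = ∑ m, K m * X * (K m)ᴴ := by
  ext a b
  simp only [Matrix.mul_apply, conjTranspose_apply, Lindblad.bigM, Matrix.of_apply,
    Matrix.sum_apply, Fintype.sum_prod_type, star_star, kroneckerMap_apply, Matrix.one_apply,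
    Prod.mk.injEq, ite_and, ite_mul, one_mul, zero_mul, mul_ite, mul_zero,
    Finset.sum_ite_irrel, Finset.sum_const_zero, Finset.sum_ite_eq, Finset.sum_ite_eq',
    Finset.mem_univ, if_true, Finset.mul_sum, Finset.sum_mul]
  refine Finset.sum_congr rfl fun m _ => ?_
  refine Finset.sum_congr rfl fun i _ => ?_
  simpa [mul_assoc] using
    Finset.sum_comm (f := fun x y => K (m, i) a x * X x y * star (K (m, i) b y))

/-- Lindblad's theorem: for a completely positive unital map whose Hilbert–Schmidt adjoint
has a positive definite fixed point, the fixed subspace is closed under multiplication. -/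
theorem stmt_17 (d : ℕ) (ζ : Matrix (Fin d) (Fin d) ℂ →ₗ[ℂ] Matrix (Fin d) (Fin d) ℂ)
    (hCP : (choi ζ).PosSemidef) (hu : ζ 1 = 1)
    (ρ₀ : Matrix (Fin d) (Fin d) ℂ) (hρ₀ : ρ₀.PosDef)
    (hfix : ∀ X : Matrix (Fin d) (Fin d) ℂ, (ρ₀ * ζ X).trace = (ρ₀ * X).trace) :
    ∀ Z W : Matrix (Fin d) (Fin d) ℂ, ζ Z = Z → ζ W = W → ζ (Z * W) = Z * W := by
  classical
  obtain ⟨K, hK⟩ := Lindblad.kraus ζ hCP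
  -- ζ preserves conjugate transpose
  have hherm : ∀ X, ζ Xᴴ = (ζ X)ᴴ := by
    intro X
    rw [hK, hK, Matrix.conjTranspose_sum]
    refine Finset.sum_congr rfl fun m _ => ?_
    simp [Matrix.conjTranspose_mul, Matrix.mul_assoc]
  -- the stacked Kraus matrix
  set M := Lindblad.bigM K with hM
  have hMM : Mᴴ * M = 1 := by
    rw [Lindblad.bigM_conjT_mul]
    have := hK 1
    simp only [Matrix.mul_one] at this
    rw [← this, hu]
  -- ζ X = Mᴴ (1 ⊗ X) M
  have hrep : ∀ X, ζ X = Mᴴ * (((1 : Matrix (Fin d × Fin d) (Fin d × Fin d) ℂ) ⊗ₖ X) * M) := by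
    intro X; rw [Lindblad.bigM_conj, hK]
  -- Kadison–Schwarz inequality
  have hKS : ∀ A : Matrix (Fin d) (Fin d) ℂ, (ζ (Aᴴ * A) - (ζ A)ᴴ * ζ A).PosSemidef := by
    intro A
    set P := M * Mᴴ with hP
    set Q := (1 : Matrix ((Fin d × Fin d) × Fin d) ((Fin d × Fin d) × Fin d) ℂ) - P with hQ
    have hQherm : Qᴴ = Q := by
      rw [hQ, Matrix.conjTranspose_sub, Matrix.conjTranspose_one, hP, Matrix.conjTranspose_mul,
        Matrix.conjTranspose_conjTranspose]
    have hPP : P * P = P := by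
      rw [hP, Matrix.mul_assoc, ← Matrix.mul_assoc Mᴴ M Mᴴ, hMM, Matrix.one_mul]
    have hQQ : Qᴴ * Q = Q := by
      rw [hQherm, hQ, Matrix.sub_mul, Matrix.one_mul, Matrix.mul_sub, Matrix.mul_one, hPP,
        sub_self, sub_zero]
    have hQpsd : Q.PosSemidef := by
      rw [← hQQ]; exact Matrix.posSemidef_conjTranspose_mul_self Q
    set T := ((1 : Matrix (Fin d × Fin d) (Fin d × Fin d) ℂ) ⊗ₖ A) * M with hT
    have hpsd : (Tᴴ * Q * T).PosSemidef := hQpsd.conjTranspose_mul_mul_same T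
    have heq : Tᴴ * Q * T = ζ (Aᴴ * A) - (ζ A)ᴴ * ζ A := by
      have hTT : Tᴴ * T = ζ (Aᴴ * A) := by
        rw [hT, Matrix.conjTranspose_mul, Lindblad.kron_conjT, Matrix.conjTranspose_one,
          hrep (Aᴴ * A)]
        rw [Matrix.mul_assoc]
        congr 1
        rw [← Matrix.mul_assoc, ← Matrix.mul_kronecker_mul, Matrix.one_mul]
      have hTPT : Tᴴ * (P * T) = (ζ A)ᴴ * ζ A := by
        rw [hT, hP, Matrix.conjTranspose_mul, Lindblad.kron_conjT, Matrix.conjTranspose_one]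
        rw [← hherm A, hrep Aᴴ, hrep A]
        -- goal: rearrange associativity
        simp only [Matrix.mul_assoc]
      rw [hQ, Matrix.mul_sub, Matrix.mul_one, Matrix.sub_mul, hTT, Matrix.mul_assoc Tᴴ P T, hTPT]
    rw [← heq]; exact hpsd
  -- squares of fixed points are fixed
  have hsq : ∀ A : Matrix (Fin d) (Fin d) ℂ, ζ A = A → ζ (Aᴴ * A) = Aᴴ * A := by
    intro A hA
    have hD : (ζ (Aᴴ * A) - Aᴴ * A).PosSemidef := by
      have := hKS A; rwa [hA] at this
    have htr : (ρ₀ * (ζ (Aᴴ * A) - Aᴴ * A)).trace = 0 := by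
      rw [Matrix.mul_sub, Matrix.trace_sub, hfix (Aᴴ * A), sub_self]
    have := Lindblad.psd_pd_trace_zero hρ₀ hD htr
    have h0 : ζ (Aᴴ * A) - Aᴴ * A = 0 := this
    linear_combination (norm := module) h0
  -- polarization
  intro Z W hZ hW
  set X := Zᴴ with hXdef
  have hX : ζ X = X := by rw [hXdef, hherm, hZ]
  have h1 : ζ ((X + W)ᴴ * (X + W)) = (X + W)ᴴ * (X + W) := hsq _ (by rw [map_add, hX, hW])
  have h2 : ζ ((X + Complex.I • W)ᴴ * (X + Complex.I • W)) =
      (X + Complex.I • W)ᴴ * (X + Complex.I • W) := by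
    refine hsq _ ?_
    rw [map_add, hX, LinearMap.map_smul, hW]
  have hXX := hsq X hX
  have hWW := hsq W hW
  -- expand h1
  have e1 : (X + W)ᴴ * (X + W) = Xᴴ * X + (Xᴴ * W + Wᴴ * X) + Wᴴ * W := by
    rw [Matrix.conjTranspose_add, Matrix.add_mul, Matrix.mul_add, Matrix.mul_add]
    abel
  have hS : ζ (Xᴴ * W + Wᴴ * X) = Xᴴ * W + Wᴴ * X := by
    have := h1
    rw [e1, map_add, map_add, hXX, hWW] at this
    have := add_right_cancel this
    exact add_left_cancel this
  -- expand h2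
  have e2 : (X + Complex.I • W)ᴴ * (X + Complex.I • W) =
      Xᴴ * X + Complex.I • (Xᴴ * W - Wᴴ * X) + Wᴴ * W := by
    rw [Matrix.conjTranspose_add, Matrix.conjTranspose_smul]
    simp only [Complex.star_def, Complex.conj_I]
    rw [Matrix.add_mul, Matrix.mul_add, Matrix.mul_add, Matrix.smul_mul, Matrix.smul_mul,
      Matrix.mul_smul, Matrix.mul_smul, smul_smul, neg_mul, Complex.I_mul_I, neg_neg, one_smul,
      smul_sub]
    module
  have hT : ζ (Xᴴ * W - Wᴴ * X) = Xᴴ * W - Wᴴ * X := by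
    have h2' := h2
    rw [e2, map_add, map_add, hXX, hWW, LinearMap.map_smul] at h2'
    have h2'' := add_right_cancel h2'
    have h2''' := add_left_cancel h2''
    have hI : (Complex.I : ℂ) ≠ 0 := Complex.I_ne_zero
    exact smul_right_injective _ hI h2'''
  have hfin : ζ (Xᴴ * W) = Xᴴ * W := by
    have hadd : ζ ((Xᴴ * W + Wᴴ * X) + (Xᴴ * W - Wᴴ * X)) =
        (Xᴴ * W + Wᴴ * X) + (Xᴴ * W - Wᴴ * X) := by
      rw [map_add, hS, hT]
    have h2X : (Xᴴ * W + Wᴴ * X) + (Xᴴ * W - Wᴴ * X) = (2 : ℂ) • (Xᴴ * W) := by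
      module
    rw [h2X, LinearMap.map_smul] at hadd
    have : (2 : ℂ) ≠ 0 := two_ne_zero
    exact smul_right_injective _ this hadd
  have : Xᴴ * W = Z * W := by rw [hXdef, Matrix.conjTranspose_conjTranspose]
  rw [← this, hfin]
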